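/- Let g₁, g₂ be nonzero vectors in a real inner product space, and let g_PCGrad = O(g₁,g₂) + O(g₂,g₁) where O(u,v) = v - (⟪u,v⟫/‖u‖²)·u. Then ⟪g_PCGrad, g₁⟫ ≥ 0 and ⟪g_PCGrad, g₂⟫ ≥ 0; i.e. the two-loss PCGrad update is conflict-free. -/

import Mathlib

open scoped RealInnerProductSpace

theorem stmt_2 {E : Type*} [NormedAddCommGroup E] [InnerProductSpace ℝ E]
    (g₁ g₂ : E) (h₁ : g₁ ≠ 0) (h₂ : g₂ ≠ 0) :
    0 ≤ ⟪(g₂ - (⟪g₁, g₂⟫ / ‖g₁‖ ^ 2) • g₁) + (g₁ - (⟪g₂, g₁⟫ / ‖g₂‖ ^ 2) • g₂), g₁⟫ ∧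
    0 ≤ ⟪(g₂ - (⟪g₁, g₂⟫ / ‖g₁‖ ^ 2) • g₁) + (g₁ - (⟪g₂, g₁⟫ / ‖g₂‖ ^ 2) • g₂), g₂⟫ := by
  have hn1 : (0:ℝ) < ‖g₁‖ ^ 2 := pow_pos (norm_pos_iff.mpr (by assumption)) 2
  have hn2 : (0:ℝ) < ‖g₂‖ ^ 2 := pow_pos (norm_pos_iff.mpr (by assumption)) 2
  have cs := real_inner_mul_inner_self_le g₁ g₂
  rw [real_inner_self_eq_norm_sq, real_inner_self_eq_norm_sq] at cs
  have hc : ⟪g₂, g₁⟫ = ⟪g₁, g₂⟫ := real_inner_comm _ _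
  constructor <;>
  · simp only [inner_add_left, inner_sub_left, real_inner_smul_left,
      real_inner_self_eq_norm_sq, hc]
    rw [div_mul_eq_mul_div, div_mul_eq_mul_div]
    rw [ge_iff_le.symm] at *
    field_simp
    nlinarith [cs, hn1, hn2]
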